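/- If g is continuously differentiable on some half-line [x₀,∞) with g(x) ≠ 0 and g'(x)/g(x) having limit structure x·g'(x)/g(x) → α as x → ∞, then for every ε > 0 one eventually has x^(α-ε) ≤ C·|g(x)| for some constant C > 0; in particular if α > 0 then |g(x)| → ∞. -/

import Mathlib

open Filter Set

lemma key_aux (g : ℝ → ℝ) (x₀ α : ℝ) (hx₀ : 0 < x₀)
    (hg : ContDiffOn ℝ 1 g (Ici x₀))
    (hne : ∀ x ∈ Ici x₀, g x ≠ 0)
    (hlim : Tendsto (fun x => x * deriv g x / g x) atTop (nhds α))
    {ε : ℝ} (hε : 0 < ε) :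
    ∃ C > 0, ∀ᶠ x in atTop, x ^ (α - ε) ≤ C * |g x| := by
  have hev : ∀ᶠ x in atTop, α - ε ≤ x * deriv g x / g x :=
    hlim.eventually (eventually_ge_nhds (by linarith))
  obtain ⟨x₁', hx₁'⟩ := eventually_atTop.mp hev
  set x₁ : ℝ := max x₁' (x₀ + 1) with hx₁def
  have hx₁0 : x₀ < x₁ := lt_of_lt_of_le (by linarith) (le_max_right _ _)
  have hx₁pos : 0 < x₁ := lt_trans hx₀ hx₁0
  have hbd : ∀ x, x₁ ≤ x → α - ε ≤ x * deriv g x / g x := fun x hx =>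
    hx₁' x (le_trans (le_max_left _ _) hx)
  set F : ℝ → ℝ := fun x => Real.log (g x) - (α - ε) * Real.log x with hF
  -- derivative facts on Ioi x₁
  have hder : ∀ x ∈ interior (Ici x₁),
      HasDerivAt F (deriv g x / g x - (α - ε) * x⁻¹) x := by
    intro x hx
    rw [interior_Ici] at hx
    have hxx₀ : x₀ < x := lt_trans hx₁0 hx
    have hxpos : 0 < x := lt_trans hx₁pos hx
    have hdg : DifferentiableAt ℝ g x :=
      ((hg.differentiableOn one_ne_zero).differentiableAt
        (Ici_mem_nhds hxx₀))
    have h1 : HasDerivAt (fun y => Real.log (g y)) (deriv g x / g x) x :=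
      hdg.hasDerivAt.log (hne x (le_of_lt hxx₀))
    have h2 : HasDerivAt (fun y => (α - ε) * Real.log y) ((α - ε) * x⁻¹) x :=
      (Real.hasDerivAt_log (ne_of_gt hxpos)).const_mul _
    exact h1.sub h2
  have hcont : ContinuousOn F (Ici x₁) := by
    apply ContinuousOn.sub
    · apply ContinuousOn.log
      · exact (hg.continuousOn).mono (Ici_subset_Ici.mpr (le_of_lt hx₁0))
      · intro x hx
        exact hne x (le_trans (le_of_lt hx₁0) hx)
    · exact continuousOn_const.mul (Real.continuousOn_log.mono
        (fun x hx => ne_of_gt (lt_of_lt_of_le hx₁pos hx)))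
  have hmono : MonotoneOn F (Ici x₁) := by
    apply monotoneOn_of_deriv_nonneg (convex_Ici x₁) hcont
    · intro x hx
      exact ((hder x hx).differentiableAt).differentiableWithinAt
    · intro x hx
      rw [(hder x hx).deriv]
      have hx' : x₁ < x := by rwa [interior_Ici] at hx
      have hxpos : 0 < x := lt_trans hx₁pos hx'
      have h := hbd x (le_of_lt hx')
      have h2 := mul_le_mul_of_nonneg_right h (le_of_lt (inv_pos.mpr hxpos))
      have hx0 : x ≠ 0 := ne_of_gt hxpos
      have hgx0 : g x ≠ 0 := hne x (le_of_lt (lt_trans hx₁0 hx'))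
      have h3 : x * deriv g x / g x * x⁻¹ = deriv g x / g x := by
        field_simp
      rw [h3] at h2
      linarith
  refine ⟨Real.exp (-(F x₁)), Real.exp_pos _, ?_⟩
  filter_upwards [eventually_ge_atTop x₁] with x hx
  have hxpos : 0 < x := lt_of_lt_of_le hx₁pos hx
  have hxx₀ : x₀ ≤ x := le_of_lt (lt_of_lt_of_le hx₁0 hx)
  have hFle : F x₁ ≤ F x := hmono self_mem_Ici hx hx
  have hgx : g x ≠ 0 := hne x hxx₀
  have habs : 0 < |g x| := abs_pos.mpr hgx
  have hlogabs : Real.log (g x) = Real.log |g x| := (Real.log_abs _).symm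
  have key : (α - ε) * Real.log x ≤ -(F x₁) + Real.log |g x| := by
    have : F x₁ ≤ Real.log |g x| - (α - ε) * Real.log x := by
      rw [← hlogabs]; exact hFle
    linarith
  calc x ^ (α - ε) = Real.exp ((α - ε) * Real.log x) := by
        rw [Real.rpow_def_of_pos hxpos]; ring_nf
    _ ≤ Real.exp (-(F x₁) + Real.log |g x|) := Real.exp_le_exp.mpr key
    _ = Real.exp (-(F x₁)) * |g x| := by
        rw [Real.exp_add, Real.exp_log habs]

theorem stmt0 (g : ℝ → ℝ) (x₀ α : ℝ) (hx₀ : 0 < x₀)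
    (hg : ContDiffOn ℝ 1 g (Ici x₀))
    (hne : ∀ x ∈ Ici x₀, g x ≠ 0)
    (hlim : Tendsto (fun x => x * deriv g x / g x) atTop (nhds α)) :
    (∀ ε > 0, ∃ C > 0, ∀ᶠ x in atTop, x ^ (α - ε) ≤ C * |g x|) ∧
      (0 < α → Tendsto (fun x => |g x|) atTop atTop) := by
  constructor
  · intro ε hε
    exact key_aux g x₀ α hx₀ hg hne hlim hε
  · intro hα
    obtain ⟨C, hC, hev⟩ := key_aux g x₀ α hx₀ hg hne hlim (half_pos hα)
    have hαhalf : α - α / 2 = α / 2 := by ring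
    rw [hαhalf] at hev
    have htend : Tendsto (fun x : ℝ => x ^ (α / 2) / C) atTop atTop :=
      (tendsto_rpow_atTop (half_pos hα)).atTop_div_const hC
    apply tendsto_atTop_mono' atTop _ htend
    filter_upwards [hev] with x h
    rw [div_le_iff₀ hC]
    linarith [h, mul_comm C |g x|]
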